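/- arXiv:2108.00001 — 3 statements merged into one kernel-verified Lean document; each statement's English description precedes it below -/
import Mathlib

section
/- For every positive integer p, there exists a finite simple graph G such that G admits a proper colouring with 7p colours, G contains no induced path on 5 vertices, and the reconfiguration graph of the 8p-colourings of G is disconnected (i.e., G is (7p)-colourable, P5-free, and not (8p)-mixing). -/
/-- `G` is `P5`-free: there are no five distinct vertices whose induced edges are exactly
the four consecutive edges of a path on them. -/
def P5Free {V : Type*} (G : SimpleGraph V) : Prop :=
  ¬ ∃ v : Fin 5 → V, Function.Injective v ∧
      ∀ i j : Fin 5, G.Adj (v i) (v j) ↔ (i.val + 1 = j.val ∨ j.val + 1 = i.val)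

/-- The reconfiguration graph `R_k(G)`: vertices are the proper `k`-colourings of `G`,
two colourings being adjacent iff they differ in colour on exactly one vertex. -/
def Recfg {V : Type*} (G : SimpleGraph V) (k : ℕ) :
    SimpleGraph {f : V → Fin k // ∀ v w, G.Adj v w → f v ≠ f w} where
  Adj f g := ∃! v, f.1 v ≠ g.1 v
  symm := by
    constructor
    rintro f g ⟨v, hv, hu⟩
    exact ⟨v, hv.symm, fun w hw => hu w hw.symm⟩
  loopless := by
    constructor
    rintro f ⟨v, hv, -⟩
    exact hv rfl

/-! ### The base graph on 16 vertices -/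

/-- Adjacency of the base graph: vertices are `x + 8*ε` with `x ∈ Z₈`, `ε ∈ {0,1}`.
Level 0 is the complement of the 8-cycle, level 1 is `K_{4,4}` (odd differences),
and across levels all edges are present except the perfect matching `x ↔ x`. -/
def adjB : Fin 16 → Fin 16 → Bool := fun a b =>
  let d := (a.val + 16 - b.val) % 8
  if a.val / 8 = b.val / 8 then
    if a.val / 8 = 0 then !(d == 0) && !(d == 1) && !(d == 7)
    else d % 2 == 1
  else !(d == 0)

lemma adjB_symm : ∀ a b : Fin 16, adjB a b = true → adjB b a = true := by decide

lemma adjB_irrefl : ∀ a : Fin 16, ¬ adjB a a = true := by decide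

def B : SimpleGraph (Fin 16) where
  Adj a b := adjB a b = true
  symm := ⟨fun a b h => adjB_symm a b h⟩
  loopless := ⟨fun a h => adjB_irrefl a h⟩

/-- The frozen 8-colouring of the base graph. -/
def f1 : Fin 16 → Fin 8 := fun v => ⟨v.val % 8, Nat.mod_lt _ (by norm_num)⟩

/-- A proper 7-colouring of the base graph. -/
def c1 : Fin 16 → Fin 7 := fun v =>
  if h : v.val < 8 then ⟨v.val / 2, by omega⟩ else ⟨4 + v.val % 2, by omega⟩

lemma B_proper_f1 : ∀ a b : Fin 16, adjB a b = true → f1 a ≠ f1 b := by decide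

lemma B_proper_c1 : ∀ a b : Fin 16, adjB a b = true → c1 a ≠ c1 b := by decide

lemma B_frozen : ∀ (v : Fin 16) (c : Fin 8), c ≠ f1 v →
    ∃ w, adjB v w = true ∧ f1 w = c := by decide

set_option maxHeartbeats 40000000 in
lemma B_2k2 : ∀ a b c d : Fin 16, adjB a b = true → adjB c d = true →
    ¬ adjB a c = true → ¬ adjB a d = true → ¬ adjB b c = true → ¬ adjB b d = true →
    a = c ∨ a = d ∨ b = c ∨ b = d := by decide

/-! ### The `p`-fold join of the base graph -/

/-- The join of `p` copies of the base graph. -/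
def Gj (p : ℕ) : SimpleGraph (Fin p × Fin 16) where
  Adj a b := a.1 ≠ b.1 ∨ (a.1 = b.1 ∧ B.Adj a.2 b.2)
  symm := by
    constructor
    rintro a b (h | ⟨h, hb⟩)
    · exact Or.inl h.symm
    · exact Or.inr ⟨h.symm, hb.symm⟩
  loopless := by
    constructor
    rintro a (h | ⟨-, hb⟩)
    · exact h rfl
    · exact B.irrefl hb

/-! ### Disconnectedness of the reconfiguration graph from a frozen colouring -/

lemma frozen_not_connected {V : Type*} (G : SimpleGraph V) (k : ℕ)
    (f g : V → Fin k) (pf : ∀ v w, G.Adj v w → f v ≠ f w)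
    (pg : ∀ v w, G.Adj v w → g v ≠ g w) (hne : f ≠ g)
    (hfr : ∀ v (c : Fin k), c ≠ f v → ∃ w, G.Adj v w ∧ f w = c) :
    ¬ (Recfg G k).Connected := by
  intro hcon
  -- the frozen colouring is an isolated vertex of the reconfiguration graph
  have hiso : ∀ y, ¬ (Recfg G k).Adj ⟨f, pf⟩ y := by
    rintro y ⟨v, hv, huniq⟩
    obtain ⟨w, hw, hfw⟩ := hfr v (y.1 v) (Ne.symm hv)
    have hwv : w ≠ v := by
      intro h; rw [h] at hfw; exact hv hfw
    have hyw : y.1 w = f w := by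
      by_contra h
      exact hwv (huniq w fun h' => h h'.symm)
    exact (y.2 v w hw) (hyw.trans hfw).symm
  have key : ∀ x y : {f : V → Fin k // ∀ v w, G.Adj v w → f v ≠ f w},
      (Recfg G k).Reachable x y → x = ⟨f, pf⟩ → x = y := by
    intro x y hr hx
    obtain ⟨w⟩ := hr
    cases w with
    | nil => rfl
    | cons h q => subst hx; exact absurd h (hiso _)
  have := key ⟨f, pf⟩ ⟨g, pg⟩ (hcon.preconnected _ _) rfl
  exact hne (congrArg Subtype.val this)

/-- For every positive integer `p`, there is a finite simple graph that is `7p`-colourable,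
`P5`-free, and not `8p`-mixing. -/
theorem statement0 (p : ℕ) (hp : 0 < p) :
    ∃ (n : ℕ) (G : SimpleGraph (Fin n)),
      (∃ f : Fin n → Fin (7 * p), ∀ v w, G.Adj v w → f v ≠ f w) ∧
      P5Free G ∧
      ¬ (Recfg G (8 * p)).Connected := by
  classical
  -- transport the `p`-fold join to `Fin (p * 16)`
  set eV : Fin p × Fin 16 ≃ Fin (p * 16) := finProdFinEquiv with heV
  refine ⟨p * 16, SimpleGraph.comap eV.symm (Gj p), ?_, ?_, ?_⟩
  · -- a proper (7p)-colouring
    have E7 : Fin p × Fin 7 ≃ Fin (7 * p) :=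
      finProdFinEquiv.trans (finCongr (mul_comm p 7))
    refine ⟨fun a => E7 ((eV.symm a).1, c1 (eV.symm a).2), ?_⟩
    intro v w hvw
    rcases hvw with h | ⟨h, hb⟩
    · intro hc
      have hpair := E7.injective hc
      rw [Prod.mk.injEq] at hpair
      exact h hpair.1
    · intro hc
      have hpair := E7.injective hc
      rw [Prod.mk.injEq] at hpair
      exact B_proper_c1 _ _ hb hpair.2
  · -- P5-freeness, via 2K2-freeness of the base graph
    rintro ⟨v, hinj, hadj⟩
    set u : Fin 5 → Fin p × Fin 16 := fun i => eV.symm (v i) with hu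
    have uinj : Function.Injective u := fun i j h => hinj (eV.symm.injective h)
    have uadj : ∀ i j : Fin 5, (Gj p).Adj (u i) (u j) ↔
        (i.val + 1 = j.val ∨ j.val + 1 = i.val) := fun i j => hadj i j
    -- the 2K2 given by vertices 0,1 and 3,4 of the path
    have h01 : (Gj p).Adj (u 0) (u 1) := (uadj 0 1).mpr (by decide)
    have h34 : (Gj p).Adj (u 3) (u 4) := (uadj 3 4).mpr (by decide)
    have h03 : ¬ (Gj p).Adj (u 0) (u 3) := fun h => by
      have := (uadj 0 3).mp h; revert this; decide
    have h04 : ¬ (Gj p).Adj (u 0) (u 4) := fun h => by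
      have := (uadj 0 4).mp h; revert this; decide
    have h13 : ¬ (Gj p).Adj (u 1) (u 3) := fun h => by
      have := (uadj 1 3).mp h; revert this; decide
    have h14 : ¬ (Gj p).Adj (u 1) (u 4) := fun h => by
      have := (uadj 1 4).mp h; revert this; decide
    -- non-adjacency in the join forces equal copies
    have e03 : (u 0).1 = (u 3).1 := by
      by_contra h; exact h03 (Or.inl h)
    have e04 : (u 0).1 = (u 4).1 := by
      by_contra h; exact h04 (Or.inl h)
    have e13 : (u 1).1 = (u 3).1 := by
      by_contra h; exact h13 (Or.inl h)
    have e14 : (u 1).1 = (u 4).1 := by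
      by_contra h; exact h14 (Or.inl h)
    have e01 : (u 0).1 = (u 1).1 := e03.trans e13.symm
    -- so all the edges/non-edges live in the base graph
    have b01 : B.Adj (u 0).2 (u 1).2 := by
      rcases h01 with h | ⟨-, hb⟩
      · exact absurd e01 h
      · exact hb
    have b34 : B.Adj (u 3).2 (u 4).2 := by
      rcases h34 with h | ⟨-, hb⟩
      · exact absurd (e03.symm.trans e04) h
      · exact hb
    have nb03 : ¬ B.Adj (u 0).2 (u 3).2 := fun hb => h03 (Or.inr ⟨e03, hb⟩)
    have nb04 : ¬ B.Adj (u 0).2 (u 4).2 := fun hb => h04 (Or.inr ⟨e04, hb⟩)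
    have nb13 : ¬ B.Adj (u 1).2 (u 3).2 := fun hb => h13 (Or.inr ⟨e13, hb⟩)
    have nb14 : ¬ B.Adj (u 1).2 (u 4).2 := fun hb => h14 (Or.inr ⟨e14, hb⟩)
    have hdist := B_2k2 (u 0).2 (u 1).2 (u 3).2 (u 4).2 b01 b34 nb03 nb04 nb13 nb14
    have snd_ne : ∀ i j : Fin 5, (u i).1 = (u j).1 → i ≠ j → (u i).2 ≠ (u j).2 := by
      intro i j h hij hs
      exact hij (uinj (Prod.ext_iff.mpr ⟨h, hs⟩))
    rcases hdist with h | h | h | h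
    · exact snd_ne 0 3 e03 (by decide) h
    · exact snd_ne 0 4 e04 (by decide) h
    · exact snd_ne 1 3 e13 (by decide) h
    · exact snd_ne 1 4 e14 (by decide) h
  · -- disconnectedness: a frozen (8p)-colouring plus a different colouring
    have E8 : Fin p × Fin 8 ≃ Fin (8 * p) :=
      finProdFinEquiv.trans (finCongr (mul_comm p 8))
    set f0 : Fin (p * 16) → Fin (8 * p) :=
      fun a => E8 ((eV.symm a).1, f1 (eV.symm a).2) with hf0
    set g0 : Fin (p * 16) → Fin (8 * p) :=
      fun a => E8 ((eV.symm a).1, (c1 (eV.symm a).2).castSucc) with hg0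
    have pf0 : ∀ v w, (SimpleGraph.comap eV.symm (Gj p)).Adj v w → f0 v ≠ f0 w := by
      intro v w hvw
      rcases hvw with h | ⟨h, hb⟩
      · intro hc
        have hpair := E8.injective hc
        rw [Prod.mk.injEq] at hpair
        exact h hpair.1
      · intro hc
        have hpair := E8.injective hc
        rw [Prod.mk.injEq] at hpair
        exact B_proper_f1 _ _ hb hpair.2
    have pg0 : ∀ v w, (SimpleGraph.comap eV.symm (Gj p)).Adj v w → g0 v ≠ g0 w := by
      intro v w hvw
      rcases hvw with h | ⟨h, hb⟩
      · intro hc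
        have hpair := E8.injective hc
        rw [Prod.mk.injEq] at hpair
        exact h hpair.1
      · intro hc
        have hpair := E8.injective hc
        rw [Prod.mk.injEq] at hpair
        exact B_proper_c1 _ _ hb (Fin.castSucc_injective 7 hpair.2)
    have hne : f0 ≠ g0 := by
      intro h
      have h7 := congrFun h (eV (⟨0, hp⟩, ⟨7, by norm_num⟩))
      rw [hf0, hg0] at h7
      simp only [Equiv.symm_apply_apply] at h7
      have hpair := E8.injective h7
      rw [Prod.mk.injEq] at hpair
      exact absurd hpair.2 (by decide)
    have hfr : ∀ v (c : Fin (8 * p)), c ≠ f0 v →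
        ∃ w, (SimpleGraph.comap eV.symm (Gj p)).Adj v w ∧ f0 w = c := by
      intro v c hc
      by_cases hij : (E8.symm c).1 = (eV.symm v).1
      · -- same copy: use frozenness of the base graph
        have hd : (E8.symm c).2 ≠ f1 (eV.symm v).2 := by
          intro h
          apply hc
          calc c = E8 (E8.symm c) := (E8.apply_symm_apply c).symm
            _ = E8 ((eV.symm v).1, f1 (eV.symm v).2) := by
                congr 1
                exact Prod.ext_iff.mpr ⟨hij, h⟩
            _ = f0 v := rfl
        obtain ⟨w2, hw2, hfw2⟩ := B_frozen (eV.symm v).2 (E8.symm c).2 hd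
        refine ⟨eV ((eV.symm v).1, w2), ?_, ?_⟩
        · show (Gj p).Adj (eV.symm v) (eV.symm (eV ((eV.symm v).1, w2)))
          rw [Equiv.symm_apply_apply]
          exact Or.inr ⟨rfl, hw2⟩
        · show E8 ((eV.symm (eV ((eV.symm v).1, w2))).1,
              f1 (eV.symm (eV ((eV.symm v).1, w2))).2) = c
          rw [Equiv.symm_apply_apply]
          show E8 ((eV.symm v).1, f1 w2) = c
          rw [hfw2, ← hij]
          exact E8.apply_symm_apply c
      · -- different copy: any vertex of the right colour class works
        have hlt : ((E8.symm c).2).val < 16 := by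
          have := ((E8.symm c).2).isLt; omega
        refine ⟨eV ((E8.symm c).1, ⟨((E8.symm c).2).val, hlt⟩), ?_, ?_⟩
        · show (Gj p).Adj (eV.symm v)
            (eV.symm (eV ((E8.symm c).1, ⟨((E8.symm c).2).val, hlt⟩)))
          rw [Equiv.symm_apply_apply]
          exact Or.inl (fun h => hij h.symm)
        · show E8 ((eV.symm (eV ((E8.symm c).1, ⟨((E8.symm c).2).val, hlt⟩))).1,
              f1 (eV.symm (eV ((E8.symm c).1, ⟨((E8.symm c).2).val, hlt⟩))).2) = c
          rw [Equiv.symm_apply_apply]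
          show E8 ((E8.symm c).1, f1 ⟨((E8.symm c).2).val, hlt⟩) = c
          have hf : f1 ⟨((E8.symm c).2).val, hlt⟩ = (E8.symm c).2 :=
            Fin.ext (Nat.mod_eq_of_lt ((E8.symm c).2).isLt)
          rw [hf]
          exact E8.apply_symm_apply c
    exact frozen_not_connected _ _ f0 g0 pf0 pg0 hne hfr
end

section
/- The proper 8-colouring β of G₁₆ is frozen: for every vertex v of G₁₆ and every colour c ∈ Fin 8, there exists a vertex u with u = v or u adjacent to v in G₁₆ such that β(u) = c. -/
/-- The 7-colouring `α` of the 16 vertices, given by the sequence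
`1,2,3,4,5,7,2,3,4,5,1,2,3,4,6,7` at positions `0,…,15`. -/
def α16 : ZMod 16 → Fin 7 :=
  fun i => ![1, 2, 3, 4, 5, 7, 2, 3, 4, 5, 1, 2, 3, 4, 6, 7] ⟨i.val, ZMod.val_lt i⟩

/-- The 8-colouring `β` given by `β i = i mod 8`. -/
def β16 : ZMod 16 → Fin 8 := fun i => Fin.ofNat 8 i.val

/-- The graph `G₁₆` on `ZMod 16`: `i` is adjacent to `j` iff `i ≠ j` and either the circular
distance between `i` and `j` is at most `4`, or both `α16 i ≠ α16 j` and `β16 i ≠ β16 j`. -/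
def G16 : SimpleGraph (ZMod 16) where
  Adj i j := i ≠ j ∧
    (min (i - j).val (j - i).val ≤ 4 ∨ (α16 i ≠ α16 j ∧ β16 i ≠ β16 j))
  symm := by
    constructor
    rintro i j ⟨h1, h2⟩
    refine ⟨h1.symm, ?_⟩
    rcases h2 with h | ⟨ha, hb⟩
    · exact Or.inl (by rwa [min_comm])
    · exact Or.inr ⟨ha.symm, hb.symm⟩
  loopless := ⟨fun i h => h.1 rfl⟩

instance : DecidableRel G16.Adj := fun i j =>
  inferInstanceAs (Decidable (i ≠ j ∧ (min (i - j).val (j - i).val ≤ 4 ∨ (α16 i ≠ α16 j ∧ β16 i ≠ β16 j))))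

/-- The proper 8-colouring `β16` of `G₁₆` is frozen: every colour of `Fin 8` appears
in the closed neighbourhood of every vertex. -/
theorem statement3 :
    (∀ i j : ZMod 16, G16.Adj i j → β16 i ≠ β16 j) ∧
    (∀ (v : ZMod 16) (c : Fin 8), ∃ u : ZMod 16, (u = v ∨ G16.Adj u v) ∧ β16 u = c) := by
  decide
end

section
/- The reconfiguration graph R_8(G₁₆) of the 8-colourings of the graph G₁₆ is disconnected; that is, G₁₆ is an 8-colourable graph that is not 8-mixing. -/
lemma beta_proper : ∀ v w, G16.Adj v w → β16 v ≠ β16 w := by decide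

lemma beta_frozen : ∀ (v : ZMod 16) (c : Fin 8), c ≠ β16 v →
    ∃ w, G16.Adj v w ∧ β16 w = c := by decide

lemma beta1_proper : ∀ v w, G16.Adj v w → β16 v + 1 ≠ β16 w + 1 := by
  intro v w h hc
  exact beta_proper v w h (by simpa using add_right_cancel hc)

/-- `G₁₆` is 8-colourable but not 8-mixing: the reconfiguration graph of its
8-colourings is disconnected. -/
theorem statement7 :
    (∃ f : ZMod 16 → Fin 8, ∀ v w, G16.Adj v w → f v ≠ f w) ∧
    ¬ (Recfg G16 8).Connected := by
  refine ⟨⟨β16, beta_proper⟩, ?_⟩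
  intro hconn
  set c0 : {f : ZMod 16 → Fin 8 // ∀ v w, G16.Adj v w → f v ≠ f w} := ⟨β16, beta_proper⟩
  set c1 : {f : ZMod 16 → Fin 8 // ∀ v w, G16.Adj v w → f v ≠ f w} :=
    ⟨fun i => β16 i + 1, beta1_proper⟩
  have hne : c0 ≠ c1 := by
    intro h
    have := congrFun (congrArg Subtype.val h) 0
    simp only [c0, c1] at this
    exact absurd this (by decide)
  obtain ⟨p⟩ := hconn.preconnected c0 c1
  have hadj := p.adj_snd (SimpleGraph.Walk.not_nil_of_ne hne)
  set g := p.getVert 1 with hg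
  · obtain ⟨v, hv, huniq⟩ := hadj
    have hv' : β16 v ≠ g.1 v := hv
    have huniq' : ∀ w, β16 w ≠ g.1 w → w = v := fun w h => huniq w h
    obtain ⟨w, hadj, hw⟩ := beta_frozen v (g.1 v) (Ne.symm hv')
    have hwv : w ≠ v := by
      intro h; subst h; exact hv' hw
    have hgw : g.1 w = β16 w := by
      by_contra h
      exact hwv (huniq' w fun h2 => h h2.symm)
    exact g.2 v w hadj (by rw [hgw, hw])
end
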